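/- Let L > 0, λ > 0, let d ≥ 1 be an integer, and define f : ℝ^d → ℝ by f(x) = (Lλ²/152) H_d(x/λ). Then for every x ∈ ℝ^d, prog_0(∇f(x)) ≤ prog_0(x) + 1; in particular, every coordinate j of ∇f(x) with j > prog_0(x) + 1 vanishes. -/

import Mathlib

/-- `Ψ(t) = 0` for `t ≤ 1/2` and `Ψ(t) = exp(1 − 1/(2t−1)²)` for `t > 1/2`. -/
noncomputable def Psi (t : ℝ) : ℝ :=
  if t ≤ 1 / 2 then 0 else Real.exp (1 - 1 / (2 * t - 1) ^ 2)

/-- `Φ(t) = √e ∫_{−∞}^{t} exp(−τ²/2) dτ`. -/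
noncomputable def Phi (t : ℝ) : ℝ :=
  Real.sqrt (Real.exp 1) * ∫ τ in Set.Iic t, Real.exp (-τ ^ 2 / 2)

/-- The `i`-th coordinate (1-based, `1 ≤ i ≤ d`) of a vector in `ℝ^d`;
zero when out of range. -/
noncomputable def coord (d : ℕ) (y : EuclideanSpace ℝ (Fin d)) (i : ℕ) : ℝ :=
  if h : i - 1 < d then y ⟨i - 1, h⟩ else 0

/-- The chain function
`H_d(x) = −Ψ(1)Φ(x₁) + ∑_{i=2}^d (Ψ(−x_{i−1})Φ(−x_i) − Ψ(x_{i−1})Φ(x_i))`. -/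
noncomputable def Hchain (d : ℕ) (y : EuclideanSpace ℝ (Fin d)) : ℝ :=
  -Psi 1 * Phi (coord d y 1) +
    ∑ i ∈ Finset.Icc 2 d,
      (Psi (-coord d y (i - 1)) * Phi (-coord d y i) -
        Psi (coord d y (i - 1)) * Phi (coord d y i))

open Classical in
/-- The progress index `prog_a(x) = max({i ∈ {1,…,d} : |x_i| > a} ∪ {0})`. -/
noncomputable def prog (d : ℕ) (a : ℝ) (y : EuclideanSpace ℝ (Fin d)) : ℕ :=
  ((Finset.Icc 1 d).filter fun i => a < |coord d y i|).sup id

lemma Psi_of_le {t : ℝ} (h : t ≤ 1 / 2) : Psi t = 0 := if_pos h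

lemma abs_coord_le_norm (d : ℕ) (z : EuclideanSpace ℝ (Fin d)) (i : ℕ) :
    |coord d z i| ≤ ‖z‖ := by
  unfold coord
  split
  · rename_i h
    rw [EuclideanSpace.norm_eq]
    calc |z ⟨i - 1, h⟩| = Real.sqrt (‖z ⟨i - 1, h⟩‖ ^ 2) := by
          rw [Real.norm_eq_abs, Real.sqrt_sq_eq_abs, abs_abs]
      _ ≤ _ := Real.sqrt_le_sqrt
          (Finset.single_le_sum (fun m _ => sq_nonneg ‖z m‖) (Finset.mem_univ _))
  · simp

lemma le_prog (d : ℕ) (a : ℝ) (y : EuclideanSpace ℝ (Fin d)) (i : ℕ)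
    (h1 : 1 ≤ i) (h2 : i ≤ d) (h3 : a < |coord d y i|) : i ≤ prog d a y :=
  Finset.le_sup (f := id) (Finset.mem_filter.2 ⟨Finset.mem_Icc.2 ⟨h1, h2⟩, h3⟩)

lemma prog_le (d : ℕ) (a : ℝ) (y : EuclideanSpace ℝ (Fin d)) (n : ℕ)
    (h : ∀ i, 1 ≤ i → i ≤ d → a < |coord d y i| → i ≤ n) : prog d a y ≤ n := by
  apply Finset.sup_le
  intro i hi
  rw [Finset.mem_filter, Finset.mem_Icc] at hi
  exact h i hi.1.1 hi.1.2 hi.2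

/-- Zero-chain property of the scaled hard instance:
`prog_0(∇f(x)) ≤ prog_0(x) + 1`, and every coordinate `j` of `∇f(x)` with
`j > prog_0(x) + 1` vanishes. -/
theorem scaled_chain_zero_chain (L lam : ℝ) (hL : 0 < L) (hlam : 0 < lam)
    (d : ℕ) (hd : 1 ≤ d)
    (f : EuclideanSpace ℝ (Fin d) → ℝ)
    (hf : ∀ x, f x = L * lam ^ 2 / 152 * Hchain d (lam⁻¹ • x)) :
    ∀ x : EuclideanSpace ℝ (Fin d),
      prog d 0 (gradient f x) ≤ prog d 0 x + 1 ∧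
        ∀ j : ℕ, prog d 0 x + 1 < j → coord d (gradient f x) j = 0 := by
  intro x
  set p := prog d 0 x with hp
  have hxc : ∀ i, p < i → coord d x i = 0 := by
    intro i hi
    by_contra hne
    have h0 : (0 : ℝ) < |coord d x i| := abs_pos.2 hne
    have hlt : i - 1 < d := by
      by_contra h'
      simp [coord, h'] at hne
    have := le_prog d 0 x i (by omega) (by omega) h0
    omega
  have key : ∀ j : ℕ, p + 1 < j → coord d (gradient f x) j = 0 := by
    intro j hj
    by_cases hk : j - 1 < d
    · set k : Fin d := ⟨j - 1, hk⟩ with hkdef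
      have hj2 : 2 ≤ j := by omega
      have hjd : j ≤ d := by omega
      have hxj1 : coord d x (j - 1) = 0 := hxc (j - 1) (by omega)
      have hxj : coord d x j = 0 := hxc j (by omega)
      have hxk : x k = 0 := by
        have := hxj
        simpa [coord, hk] using this
      set A : EuclideanSpace ℝ (Fin d) →L[ℝ] EuclideanSpace ℝ (Fin d) :=
        ContinuousLinearMap.id ℝ _ -
          (EuclideanSpace.proj k).smulRight (EuclideanSpace.single k (1 : ℝ)) with hAdef
      have hA_apply : ∀ (z : EuclideanSpace ℝ (Fin d)) (m : Fin d),
          A z m = z m - z k * (if m = k then (1 : ℝ) else 0) := by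
        intro z m
        simp [hAdef, EuclideanSpace.single_apply]
      have hcs : ∀ (z : EuclideanSpace ℝ (Fin d)) (i : ℕ),
          coord d (lam⁻¹ • z) i = lam⁻¹ * coord d z i := by
        intro z i
        unfold coord
        split
        · rfl
        · ring
      have hcA : ∀ (z : EuclideanSpace ℝ (Fin d)) (i : ℕ), i ≠ j →
          coord d (A z) i = coord d z i := by
        intro z i hi
        unfold coord
        split
        · rename_i h
          rw [hA_apply]
          have hne : (⟨i - 1, h⟩ : Fin d) ≠ k := by
            rw [hkdef, ne_eq, Fin.mk.injEq]
            omega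
          simp [hne]
        · rfl
      have hcAj : ∀ (z : EuclideanSpace ℝ (Fin d)), coord d (A z) j = 0 := by
        intro z
        unfold coord
        rw [dif_pos hk, hA_apply]
        simp [hkdef]
      have hball : ∀ y ∈ Metric.ball x (lam / 2), f y = f (A y) := by
        intro y hy
        have hny : ‖y - x‖ < lam / 2 := by
          rw [← dist_eq_norm]
          exact Metric.mem_ball.1 hy
        have hsub : ∀ i, |coord d y i - coord d x i| ≤ ‖y - x‖ := by
          intro i
          have h1 := abs_coord_le_norm d (y - x) i
          have hc : coord d (y - x) i = coord d y i - coord d x i := by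
            unfold coord
            split
            · rfl
            · ring
          rwa [hc] at h1
        have hb1 : |coord d y (j - 1)| < lam / 2 := by
          have := lt_of_le_of_lt (hsub (j - 1)) hny
          rwa [hxj1, sub_zero] at this
        have hb2 : |coord d y j| < lam / 2 := by
          have := lt_of_le_of_lt (hsub j) hny
          rwa [hxj, sub_zero] at this
        have habs : ∀ c : ℝ, |c| < lam / 2 → |lam⁻¹ * c| < 1 / 2 := by
          intro c hc
          rw [abs_mul, abs_of_pos (inv_pos.2 hlam)]
          calc lam⁻¹ * |c| < lam⁻¹ * (lam / 2) := by
                exact mul_lt_mul_of_pos_left hc (inv_pos.2 hlam)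
            _ = 1 / 2 := by field_simp
        have hsmall1 : |coord d (lam⁻¹ • y) (j - 1)| < 1 / 2 := by
          rw [hcs]; exact habs _ hb1
        have hsmall2 : |coord d (lam⁻¹ • y) j| < 1 / 2 := by
          rw [hcs]; exact habs _ hb2
        have hAj0 : coord d (lam⁻¹ • A y) j = 0 := by
          rw [hcs, hcAj, mul_zero]
        have hAeq : ∀ i, i ≠ j → coord d (lam⁻¹ • A y) i = coord d (lam⁻¹ • y) i := by
          intro i hi
          rw [hcs, hcs, hcA y i hi]
        rw [hf, hf]
        congr 1
        unfold Hchain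
        congr 1
        · rw [hAeq 1 (by omega)]
        · apply Finset.sum_congr rfl
          intro i hi
          rw [Finset.mem_Icc] at hi
          rcases eq_or_ne i j with rfl | hij
          · have heq : coord d (lam⁻¹ • A y) (i - 1) = coord d (lam⁻¹ • y) (i - 1) :=
              hAeq (i - 1) (by omega)
            rw [heq,
              Psi_of_le (le_of_lt (lt_of_le_of_lt (le_abs_self _) hsmall1)),
              Psi_of_le (by have := abs_lt.1 hsmall1; linarith)]
            ring
          · rcases eq_or_ne i (j + 1) with hij1 | hij1
            · have hii : i - 1 = j := by omega
              rw [hii, hAeq i hij, hAj0, neg_zero,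
                Psi_of_le (le_of_lt (lt_of_le_of_lt (le_abs_self _) hsmall2)),
                Psi_of_le (by have := abs_lt.1 hsmall2; linarith),
                Psi_of_le (le_refl ((1:ℝ)/2) |> fun _ => by norm_num : (0:ℝ) ≤ 1/2)]
              try ring
            · rw [hAeq i hij, hAeq (i - 1) (by omega)]
      have hEq : f =ᶠ[nhds x] fun y => f (A y) := by
        filter_upwards [Metric.ball_mem_nhds x (by positivity : (0 : ℝ) < lam / 2)] with y hy
        exact hball y hy
      have hAx : A x = x := by
        ext m
        rw [hA_apply, hxk]
        ring
      have hAs : A (EuclideanSpace.single k (1 : ℝ)) = 0 := by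
        ext m
        rw [hA_apply]
        simp [EuclideanSpace.single_apply]
      have hfd0 : fderiv ℝ f x (EuclideanSpace.single k (1 : ℝ)) = 0 := by
        by_cases hdiff : DifferentiableAt ℝ f x
        · have hdfAx : DifferentiableAt ℝ f (A x) := by rw [hAx]; exact hdiff
          have hcomp : fderiv ℝ (f ∘ A) x =
              (fderiv ℝ f (A x)).comp (fderiv ℝ A x) := fderiv_comp x hdfAx A.differentiableAt
          have h1 : fderiv ℝ f x = fderiv ℝ (fun y => f (A y)) x := hEq.fderiv_eq
          rw [h1]
          show fderiv ℝ (f ∘ A) x (EuclideanSpace.single k (1 : ℝ)) = 0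
          rw [hcomp, A.fderiv]
          simp [hAs, hAx]
        · rw [fderiv_zero_of_not_differentiableAt hdiff]
          rfl
      have hgrad : coord d (gradient f x) j =
          fderiv ℝ f x (EuclideanSpace.single k (1 : ℝ)) := by
        have h2 : (inner ℝ (gradient f x) (EuclideanSpace.single k (1 : ℝ)) : ℝ)
            = fderiv ℝ f x (EuclideanSpace.single k (1 : ℝ)) := by
          rw [gradient]
          exact InnerProductSpace.toDual_symm_apply
        rw [← h2, EuclideanSpace.inner_single_right]
        simp [coord, hk, hkdef]
      rw [hgrad, hfd0]
    · simp [coord, hk]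
  refine ⟨?_, key⟩
  apply prog_le
  intro i h1 h2 h3
  by_contra hlt
  push_neg at hlt
  rw [key i hlt] at h3
  simp at h3
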